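/- Let α, β be positive real numbers and let k ≥ 1 and n ≥ 0 be integers. Then ∑_{j=0}^{n} C(n+1,j+1) · ( ∑_{m=0}^{j} C(j,m) (-1)^{j-m} (αm+β)^{-k} ) = ∑_{i=0}^{n} 1/(αi+β)^k, where C(n,j) denotes the binomial coefficient; equivalently the left-hand side equals β^{-k} + H_n^{(k)}(α,β), where H_n^{(k)}(α,β) = ∑_{i=1}^{n} 1/(αi+β)^k denotes the generalized k-order harmonic numbers. -/

import Mathlib

open Finset

-- alternating sum of choose in ℝ
lemma alt_sum_real (N : ℕ) :
    ∑ i ∈ range (N + 1), (-1 : ℝ) ^ i * (N.choose i : ℝ) = if N = 0 then 1 else 0 := by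
  have h := @Int.alternating_sum_range_choose N
  have := congrArg (fun z : ℤ => (z : ℝ)) h
  push_cast at this
  simpa using this

lemma coeff_sum (N m : ℕ) (hm : m ≤ N) :
    ∑ j ∈ Icc m N, (-1 : ℝ) ^ (j - m) * (N.choose j : ℝ) * (j.choose m : ℝ)
      = if m = N then 1 else 0 := by
  have hred : ∀ i ∈ range (N - m + 1),
      (-1 : ℝ) ^ ((m + i) - m) * (N.choose (m + i) : ℝ) * ((m + i).choose m : ℝ)
        = (N.choose m : ℝ) * ((-1 : ℝ) ^ i * ((N - m).choose i : ℝ)) := by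
    intro i hi
    rw [mem_range] at hi
    have h1 : m + i ≤ N := by omega
    have h2 : N.choose (m + i) * (m + i).choose m = N.choose m * (N - m).choose i := by
      have := Nat.choose_mul (n := N) (Nat.le_add_right m i)
      simpa using this
    have h2' : (N.choose (m + i) : ℝ) * ((m + i).choose m : ℝ)
        = (N.choose m : ℝ) * ((N - m).choose i : ℝ) := by exact_mod_cast congrArg Nat.cast h2
    have h3 : (m + i) - m = i := by omega
    rw [h3, mul_assoc, h2']
    ring
  rw [show Icc m N = map (addLeftEmbedding m) (range (N - m + 1)) by
      ext x; simp [mem_map, addLeftEmbedding]; constructor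
      · rintro ⟨h1, h2⟩; exact ⟨x - m, by omega, by omega⟩
      · rintro ⟨a, ha, rfl⟩; omega]
  rw [sum_map]
  simp only [addLeftEmbedding_apply]
  rw [sum_congr rfl hred, ← mul_sum, alt_sum_real]
  by_cases h : m = N <;> simp [h, Nat.sub_eq_zero_iff_le, hm, Nat.choose_self]
  · omega

-- binomial inversion
lemma binom_inv (f : ℕ → ℝ) (N : ℕ) :
    ∑ j ∈ range (N + 1), (N.choose j : ℝ) *
      ∑ m ∈ range (j + 1), (j.choose m : ℝ) * (-1) ^ (j - m) * f m = f N := by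
  have step1 : ∀ j ∈ range (N + 1),
      (N.choose j : ℝ) * ∑ m ∈ range (j + 1), (j.choose m : ℝ) * (-1) ^ (j - m) * f m
        = ∑ m ∈ range (N + 1), if m ≤ j then
            (-1 : ℝ) ^ (j - m) * (N.choose j : ℝ) * (j.choose m : ℝ) * f m else 0 := by
    intro j hj
    rw [mem_range] at hj
    rw [mul_sum]
    rw [← sum_subset (by intro x hx; rw [mem_range] at *; omega :
        range (j + 1) ⊆ range (N + 1))]
    · apply sum_congr rfl
      intro m hm; rw [mem_range] at hm
      rw [if_pos (by omega)]; ring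
    · intro x hx hx'
      rw [mem_range] at hx; rw [mem_range] at hx'
      rw [if_neg (by omega)]
  rw [sum_congr rfl step1, sum_comm]
  have step2 : ∀ m ∈ range (N + 1),
      (∑ j ∈ range (N + 1), if m ≤ j then
          (-1 : ℝ) ^ (j - m) * (N.choose j : ℝ) * (j.choose m : ℝ) * f m else 0)
        = (if m = N then 1 else 0) * f m := by
    intro m hm
    rw [mem_range] at hm
    rw [← coeff_sum N m (by omega), sum_mul]
    rw [← sum_subset (by intro x hx; rw [mem_Icc] at hx; rw [mem_range]; omega :
        Icc m N ⊆ range (N + 1))]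
    · apply sum_congr rfl; intro j hj; rw [mem_Icc] at hj
      rw [if_pos hj.1]
    · intro x hx hx'; rw [mem_range] at hx; rw [mem_Icc] at hx'
      rw [if_neg (by omega)]
  rw [sum_congr rfl step2]
  have : (∑ x ∈ range (N+1), (if x = N then 1 else 0) * f x)
      = ∑ x ∈ range (N+1), if x = N then f x else 0 := by
    apply sum_congr rfl; intro x _; split <;> simp
  rw [this, sum_ite_eq' (range (N+1)) N f, if_pos (by simp)]

lemma key (f : ℕ → ℝ) (n : ℕ) :
    ∑ j ∈ range (n + 1), ((n + 1).choose (j + 1) : ℝ) *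
      ∑ m ∈ range (j + 1), (j.choose m : ℝ) * (-1) ^ (j - m) * f m
      = ∑ i ∈ range (n + 1), f i := by
  induction n with
  | zero => simp
  | succ n ih =>
    have pascal : ∀ j : ℕ, ((n + 2).choose (j + 1) : ℝ)
        = ((n + 1).choose j : ℝ) + ((n + 1).choose (j + 1) : ℝ) := by
      intro j; exact_mod_cast congrArg Nat.cast (Nat.choose_succ_succ (n + 1) j)
    calc ∑ j ∈ range (n + 2), ((n + 2).choose (j + 1) : ℝ) *
          ∑ m ∈ range (j + 1), (j.choose m : ℝ) * (-1) ^ (j - m) * f m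
        = (∑ j ∈ range (n + 2), ((n + 1).choose j : ℝ) *
            ∑ m ∈ range (j + 1), (j.choose m : ℝ) * (-1) ^ (j - m) * f m)
          + ∑ j ∈ range (n + 2), ((n + 1).choose (j + 1) : ℝ) *
            ∑ m ∈ range (j + 1), (j.choose m : ℝ) * (-1) ^ (j - m) * f m := by
          rw [← sum_add_distrib]
          apply sum_congr rfl; intro j _; rw [pascal j]; ring
      _ = f (n + 1) + ∑ i ∈ range (n + 1), f i := by
          rw [binom_inv f (n + 1)]
          congr 1
          rw [sum_range_succ, Nat.choose_succ_self, ← ih]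
          simp
      _ = ∑ i ∈ range (n + 2), f i := by rw [sum_range_succ f (n + 1)]; ring

/-- Expansion of the generalized `k`-order harmonic numbers by the
generalized Stirling numbers of the second kind. -/
theorem stmt_4 (α β : ℝ) (hα : 0 < α) (hβ : 0 < β) (k n : ℕ) (hk : 1 ≤ k) :
    (∑ j ∈ Finset.range (n + 1),
      ((n + 1).choose (j + 1) : ℝ) *
        (∑ m ∈ Finset.range (j + 1),
          (j.choose m : ℝ) * (-1) ^ (j - m) / (α * m + β) ^ k)) =
      ∑ i ∈ Finset.range (n + 1), 1 / (α * i + β) ^ k ∧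
    (∑ j ∈ Finset.range (n + 1),
      ((n + 1).choose (j + 1) : ℝ) *
        (∑ m ∈ Finset.range (j + 1),
          (j.choose m : ℝ) * (-1) ^ (j - m) / (α * m + β) ^ k)) =
      1 / β ^ k + ∑ i ∈ Finset.Icc 1 n, 1 / (α * i + β) ^ k := by
  have h1 : (∑ j ∈ Finset.range (n + 1),
      ((n + 1).choose (j + 1) : ℝ) *
        (∑ m ∈ Finset.range (j + 1),
          (j.choose m : ℝ) * (-1) ^ (j - m) / (α * m + β) ^ k)) =
      ∑ i ∈ Finset.range (n + 1), 1 / (α * i + β) ^ k := by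
    rw [← key (fun i => 1 / (α * i + β) ^ k) n]
    apply sum_congr rfl; intro j _
    congr 1
    apply sum_congr rfl; intro m _
    rw [mul_one_div, mul_div_assoc]
  refine ⟨h1, h1.trans ?_⟩
  have h2 : range (n + 1) = insert 0 (Icc 1 n) := by
    ext x; simp only [mem_range, mem_insert, mem_Icc]; omega
  rw [h2, sum_insert (by simp)]
  norm_num
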